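/- Let E0 ⊆ E be a bounded set and suppose the rate-function family satisfies the growth conditions (G1) and (G2). Fix r > 0 and δ ≥ 0, and for T > 0 and θ' ∈ E define the feasible set 𝓘_{T,r}(θ') = {θ ∈ Θ : a_T(θ' − θ) ∈ S^δ_{θ,r}}. Then there exist constants C0 > 0 and T0 > 0 (depending only on E0) such that sup_{T ≥ T0} sup_{θ'_0 ∈ E0} sup_{θ ∈ 𝓘_{T,r}(θ'_0)} max{‖θ‖, a_T‖θ'_0 − θ‖} ≤ C0. -/
import Mathlib


set_option autoImplicit false

open Filter Topology Metric Set MeasureTheory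

noncomputable section

variable {E : Type*} [NormedAddCommGroup E] [NormedSpace ℝ E]

/-- The sublevel set `S_{θ,r} = {ϑ ∈ E : I_θ(ϑ) ≤ r}` of the rate function. -/
def sublevelSet (I : E → E → ENNReal) (θ : E) (r : ℝ) : Set E :=
  {ϑ : E | I θ ϑ ≤ ENNReal.ofReal r}

/-- The open `δ`-fattening `S^δ_{θ,r}` of the sublevel set, where `S^0_{θ,r} = S_{θ,r}`;
for `δ > 0` it is the set of points at distance `< δ` from `S_{θ,r}`, i.e. the union of
open balls of radius `δ` around points of `S_{θ,r}`. -/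
def fatSublevel (I : E → E → ENNReal) (θ : E) (r δ : ℝ) : Set E :=
  if δ = 0 then sublevelSet I θ r
  else ⋃ ϑ ∈ sublevelSet I θ r, Metric.ball ϑ δ

/-- Growth condition (G1): for sequences `θ_n ∈ Θ` with `sup_n ‖θ_n‖ < ∞` and
`‖ϑ_n‖ → ∞`, `I_{θ_n}(ϑ_n) → ∞`. -/
def GrowthG1 (Θ : Set E) (I : E → E → ENNReal) : Prop :=
  ∀ θs ϑs : ℕ → E, (∀ n, θs n ∈ Θ) → (∃ C : ℝ, ∀ n, ‖θs n‖ ≤ C) →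
    Tendsto (fun n => ‖ϑs n‖) atTop atTop →
    Tendsto (fun n => I (θs n) (ϑs n)) atTop (nhds ⊤)

/-- Growth condition (G2): for sequences `θ_n ∈ Θ` with `‖θ_n‖ → ∞` and
`‖ϑ_n‖/‖θ_n‖ → ∞`, `limsup_n I_{θ_n}(ϑ_n) = ∞`. -/
def GrowthG2 (Θ : Set E) (I : E → E → ENNReal) : Prop :=
  ∀ θs ϑs : ℕ → E, (∀ n, θs n ∈ Θ) →
    Tendsto (fun n => ‖θs n‖) atTop atTop →
    Tendsto (fun n => ‖ϑs n‖ / ‖θs n‖) atTop atTop →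
    Filter.limsup (fun n => I (θs n) (ϑs n)) atTop = ⊤

/-- The upper confidence bound `J̄^δ_{T,r}(θ') = sup {J(θ) : θ ∈ Θ, a_T (θ' - θ) ∈ S^δ_{θ,r}}`. -/
def upperCB (Θ : Set E) (I : E → E → ENNReal) (J : E → ℝ) (r δ : ℝ) (a : ℝ → ℝ)
    (T : ℝ) (θ' : E) : ℝ :=
  sSup (J '' {θ : E | θ ∈ Θ ∧ a T • (θ' - θ) ∈ fatSublevel I θ r δ})

/-- The lower confidence bound `J̲^δ_{T,r}(θ') = inf {J(θ) : θ ∈ Θ, a_T (θ' - θ) ∈ S^δ_{θ,r}}`. -/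
def lowerCB (Θ : Set E) (I : E → E → ENNReal) (J : E → ℝ) (r δ : ℝ) (a : ℝ → ℝ)
    (T : ℝ) (θ' : E) : ℝ :=
  sInf (J '' {θ : E | θ ∈ Θ ∧ a T • (θ' - θ) ∈ fatSublevel I θ r δ})

/-- uniform version of the boundedness of the feasible sets
`𝓘_{T,r}(θ') = {θ ∈ Θ : a_T(θ' − θ) ∈ S^δ_{θ,r}}` over a bounded set `E0`. -/
private lemma freq_of_unbounded (f : ℕ → ℝ) (h : ¬ ∃ C : ℝ, ∀ n, f n ≤ C) (m : ℕ) :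
    ∃ᶠ k in Filter.atTop, (m : ℝ) < f k := by
  by_contra hf
  rw [Filter.not_frequently] at hf
  simp only [not_lt] at hf
  obtain ⟨N, hN⟩ := Filter.eventually_atTop.1 hf
  apply h
  refine ⟨max (m : ℝ) (((Finset.range (N + 1)).image f).max' (by simp)), fun n => ?_⟩
  rcases le_or_gt N n with hn | hn
  · exact le_max_of_le_left (hN n hn)
  · exact le_max_of_le_right
      (Finset.le_max' _ _ (Finset.mem_image_of_mem f (Finset.mem_range.2 (by omega))))

theorem stmt2 (Θ : Set E) (hΘ : Θ.Nonempty) (I : E → E → ENNReal)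
    (a : ℝ → ℝ) (hapos : ∀ T > 0, 0 < a T) (hatop : Tendsto a atTop atTop)
    (hG1 : GrowthG1 Θ I) (hG2 : GrowthG2 Θ I)
    (r δ : ℝ) (hr : 0 < r) (hδ : 0 ≤ δ)
    (E0 : Set E) (hE0 : Bornology.IsBounded E0) :
    ∃ C0 > 0, ∃ T0 > 0, ∀ T ≥ T0, ∀ θ'0 ∈ E0, ∀ θ ∈ Θ,
      a T • (θ'0 - θ) ∈ fatSublevel I θ r δ →
        max ‖θ‖ (a T * ‖θ'0 - θ‖) ≤ C0 := by
  have hfat : ∀ θ ϑ : E, ϑ ∈ fatSublevel I θ r δ →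
      ∃ ϑ', I θ ϑ' ≤ ENNReal.ofReal r ∧ ‖ϑ - ϑ'‖ ≤ δ := by
    intro θ ϑ hmem
    unfold fatSublevel at hmem
    split_ifs at hmem with h0
    · exact ⟨ϑ, hmem, by simp [h0, le_refl]⟩
    · simp only [Set.mem_iUnion, Metric.mem_ball, exists_prop] at hmem
      obtain ⟨x, hx1, hx2⟩ := hmem
      exact ⟨x, hx1, by rw [← dist_eq_norm]; exact hx2.le⟩
  by_contra hcon
  push_neg at hcon
  obtain ⟨M, hM⟩ := hE0.exists_norm_le
  have key : ∀ n : ℕ, ∃ T : ℝ, ((n : ℝ) + 1 ≤ T) ∧ ∃ θ'0, θ'0 ∈ E0 ∧ ∃ θ, θ ∈ Θ ∧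
      (a T • (θ'0 - θ) ∈ fatSublevel I θ r δ ∧
      (n : ℝ) + 1 < max ‖θ‖ (a T * ‖θ'0 - θ‖)) := by
    intro n
    obtain ⟨T, hT, θ'0, h1, θ, h2, h3, h4⟩ :=
      hcon ((n : ℝ) + 1) (by positivity) ((n : ℝ) + 1) (by positivity)
    exact ⟨T, hT, θ'0, h1, θ, h2, h3, h4⟩
  choose T hT θ'0 hθ'0 θm hθm hcomb using key
  have hmem := fun n => (hcomb n).1
  have hbig := fun n => (hcomb n).2
  have hTpos : ∀ n, 0 < T n := fun n => lt_of_lt_of_le (by positivity) (hT n)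
  have haT : ∀ n, 0 < a (T n) := fun n => hapos _ (hTpos n)
  choose ϑ' hI hdist using fun n => hfat (θm n) _ (hmem n)
  have hnormϑ : ∀ n, ‖a (T n) • (θ'0 n - θm n)‖ = a (T n) * ‖θ'0 n - θm n‖ := fun n => by
    rw [norm_smul, Real.norm_eq_abs, abs_of_pos (haT n)]
  have hϑ'ge : ∀ n, a (T n) * ‖θ'0 n - θm n‖ - δ ≤ ‖ϑ' n‖ := by
    intro n
    have h1 := norm_sub_norm_le (a (T n) • (θ'0 n - θm n)) (ϑ' n)
    have h2 := hdist n
    rw [hnormϑ n] at h1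
    linarith
  have hM0 : 0 ≤ M := le_trans (norm_nonneg _) (hM _ (hθ'0 0))
  by_cases hbd : ∃ C : ℝ, ∀ n, ‖θm n‖ ≤ C
  · obtain ⟨C, hC⟩ := hbd
    have hϑtop : Tendsto (fun n => ‖ϑ' n‖) atTop atTop := by
      apply tendsto_atTop_mono' atTop (f₁ := fun n : ℕ => (n : ℝ) + (1 - δ))
      · filter_upwards [eventually_ge_atTop ⌈C⌉₊] with n hn
        have hcn : C ≤ (n : ℝ) := le_trans (Nat.le_ceil C) (by exact_mod_cast hn)
        have h2 : (n : ℝ) + 1 < a (T n) * ‖θ'0 n - θm n‖ := by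
          rcases lt_max_iff.1 (hbig n) with h | h
          · linarith [hC n]
          · exact h
        linarith [hϑ'ge n]
      · exact tendsto_atTop_add_const_right atTop (1 - δ) tendsto_natCast_atTop_atTop
    have htend := hG1 θm ϑ' hθm ⟨C, hC⟩ hϑtop
    have hle : (⊤ : ENNReal) ≤ ENNReal.ofReal r :=
      le_of_tendsto htend (Filter.Eventually.of_forall hI)
    exact ENNReal.ofReal_ne_top (top_le_iff.mp hle)
  · obtain ⟨φ, hφ, hφgt⟩ := Filter.extraction_forall_of_frequently
      (freq_of_unbounded (fun n => ‖θm n‖) hbd)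
    have hθtop : Tendsto (fun n => ‖θm (φ n)‖) atTop atTop :=
      tendsto_atTop_mono (fun n => (hφgt n).le) tendsto_natCast_atTop_atTop
    have hTφ : Tendsto (fun n => T (φ n)) atTop atTop := by
      apply tendsto_atTop_mono (f := fun n : ℕ => (n : ℝ)) _ tendsto_natCast_atTop_atTop
      intro n
      have : (n : ℝ) ≤ (φ n : ℝ) := by exact_mod_cast hφ.le_apply
      linarith [hT (φ n)]
    have haφ : Tendsto (fun n => a (T (φ n))) atTop atTop := hatop.comp hTφ
    have hratio : Tendsto (fun n => ‖ϑ' (φ n)‖ / ‖θm (φ n)‖) atTop atTop := by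
      apply tendsto_atTop_mono' atTop (f₁ := fun n => a (T (φ n)) / 2 + (-δ))
      · filter_upwards [hθtop.eventually_ge_atTop (2 * M + 2)] with n hn
        set t := ‖θm (φ n)‖ with ht
        set an := a (T (φ n)) with han
        have htpos : (0 : ℝ) < t := by linarith
        rw [← sub_eq_add_neg, le_div_iff₀ htpos]
        have h1 : t - M ≤ ‖θ'0 (φ n) - θm (φ n)‖ := by
          have := norm_sub_norm_le (θm (φ n)) (θ'0 (φ n))
          rw [norm_sub_rev] at this
          linarith [hM _ (hθ'0 (φ n))]
        have h2 := hϑ'ge (φ n)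
        have hp1 : an * (t - M) ≤ an * ‖θ'0 (φ n) - θm (φ n)‖ :=
          mul_le_mul_of_nonneg_left h1 (haT (φ n)).le
        have hp2 : (0 : ℝ) ≤ an * (t - M - t / 2) :=
          mul_nonneg (haT (φ n)).le (by linarith)
        have hp3 : δ ≤ δ * t := le_mul_of_one_le_right hδ (by linarith)
        nlinarith [hp1, hp2, hp3, h2]
      · exact tendsto_atTop_add_const_right atTop (-δ)
          (haφ.atTop_div_const (by norm_num))
    have hlimsup := hG2 (fun n => θm (φ n)) (fun n => ϑ' (φ n))
      (fun n => hθm (φ n)) hθtop hratio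
    have hle : Filter.limsup (fun n => I (θm (φ n)) (ϑ' (φ n))) atTop ≤ ENNReal.ofReal r :=
      Filter.limsup_le_of_le (h := Filter.Eventually.of_forall fun n => hI (φ n))
    rw [hlimsup] at hle
    exact ENNReal.ofReal_ne_top (top_le_iff.mp hle)
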